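/- Let Ω = [0,1] with Lebesgue measure μ, fix 0 < c ≤ 1, and let n be the unique positive integer with 1/(n+1) < c ≤ 1/n. Set r = 1 − nc, q_k = (n−k+1)/(n(n+1)) for k = 1,…,n, and a = Σ_{k=1}^n q_k (𝟙_{[(k−1)c, kc]} + 𝟙_{[1−kc, 1−(k−1)c]}). Then for almost every x ∈ [0,1], a(x) = 1/(n+1) if x lies in [0,r) ∪ (c, c+r) ∪ (2c, 2c+r) ∪ ⋯ ∪ (nc, 1], and a(x) = 1/n otherwise; moreover for every t ∈ [0, 1−c], ∫_t^{t+c} 1/a(x) dx = 1. -/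

import Mathlib

open MeasureTheory

lemma sum_ind_eq {n : ℕ} (q : ℕ → ℝ) (S : ℕ → Set ℝ) (x : ℝ) (j : ℕ)
    (hmem : ∀ k : ℕ, x ∈ S k ↔ k = j) :
    ∑ k ∈ Finset.Icc 1 n, q k * (S k).indicator 1 x
      = if 1 ≤ j ∧ j ≤ n then q j else 0 := by
  by_cases h : 1 ≤ j ∧ j ≤ n
  · rw [if_pos h, Finset.sum_eq_single_of_mem j (Finset.mem_Icc.mpr h)]
    · rw [Set.indicator_of_mem ((hmem j).mpr rfl)]; simp
    · intro k _ hkj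
      rw [Set.indicator_of_notMem (fun hx => hkj ((hmem k).mp hx))]
      simp
  · rw [if_neg h]
    apply Finset.sum_eq_zero
    intro k hk
    rw [Set.indicator_of_notMem]
    · simp
    · intro hx
      rcases Finset.mem_Icc.mp hk with ⟨h1, h2⟩
      exact h (((hmem k).mp hx) ▸ ⟨h1, h2⟩)

lemma keyA (c : ℝ) (hc0 : 0 < c) (n : ℕ) (hn : 1 ≤ n)
    (hlow : 1 / ((n : ℝ) + 1) < c)
    (r : ℝ) (hr : r = 1 - n * c)
    (q : ℕ → ℝ) (hq : ∀ k, q k = ((n : ℝ) - k + 1) / ((n : ℝ) * (n + 1)))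
    (a : ℝ → ℝ)
    (ha : ∀ x, a x = ∑ k ∈ Finset.Icc 1 n, q k *
      ((Set.Icc (((k : ℝ) - 1) * c) (k * c)).indicator 1 x +
       (Set.Icc (1 - (k : ℝ) * c) (1 - ((k : ℝ) - 1) * c)).indicator 1 x))
    (x : ℝ) (m : ℕ) (hm : m ≤ n) (h1 : (m : ℝ) * c < x) (h2 : x < m * c + r) :
    a x = 1 / ((n : ℝ) + 1) := by
  have hn0 : (0:ℝ) < n := by exact_mod_cast hn
  have hn1 : (0:ℝ) < (n:ℝ) + 1 := by linarith
  have hrc : r < c := by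
    rw [hr]
    have := (div_lt_iff₀ hn1).mp hlow
    nlinarith
  have hNc : ((n - m : ℕ) : ℝ) = (n : ℝ) - m := by
    rw [Nat.cast_sub hm]
  have hmr : (m : ℝ) ≤ n := by exact_mod_cast hm
  have mem1 : ∀ k : ℕ, x ∈ Set.Icc (((k : ℝ) - 1) * c) (k * c) ↔ k = m + 1 := by
    intro k
    simp only [Set.mem_Icc]
    constructor
    · rintro ⟨hl, hu⟩
      have hk1 : (m : ℝ) < k := by nlinarith
      have hk2 : (k : ℝ) < (m : ℝ) + 2 := by nlinarith
      have hk1' : m < k := by exact_mod_cast hk1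
      have hk2' : (k : ℝ) < ((m + 2 : ℕ) : ℝ) := by push_cast; linarith
      have hk2'' : k < m + 2 := by exact_mod_cast hk2'
      omega
    · rintro rfl
      push_cast
      constructor <;> nlinarith
  have mem2 : ∀ k : ℕ, x ∈ Set.Icc (1 - (k : ℝ) * c) (1 - ((k : ℝ) - 1) * c)
      ↔ k = (n - m) + 1 := by
    intro k
    simp only [Set.mem_Icc]
    have hb1 : ((n : ℝ) - m) * c < 1 - x := by nlinarith [hr]
    have hb2 : 1 - x < ((n : ℝ) - m) * c + r := by nlinarith [hr]
    constructor
    · rintro ⟨hl, hu⟩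
      have hk1 : (n : ℝ) - m < k := by nlinarith
      have hk2 : (k : ℝ) < (n : ℝ) - m + 2 := by nlinarith
      have hk1' : (n - m : ℕ) < k := by
        have : ((n - m : ℕ) : ℝ) < k := by rw [hNc]; exact hk1
        exact_mod_cast this
      have hk2' : (k : ℝ) < (((n - m) + 2 : ℕ) : ℝ) := by push_cast [hNc]; linarith
      have hk2'' : k < (n - m) + 2 := by exact_mod_cast hk2'
      omega
    · rintro rfl
      push_cast [hNc]
      constructor <;> nlinarith
  rw [ha x]
  simp only [mul_add, Finset.sum_add_distrib]
  rw [sum_ind_eq q _ x (m + 1) mem1, sum_ind_eq q _ x ((n - m) + 1) mem2]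
  rcases Nat.eq_zero_or_pos m with hm0 | hm1
  · subst hm0
    rw [if_pos (by omega : 1 ≤ 0 + 1 ∧ 0 + 1 ≤ n), if_neg (by omega : ¬(1 ≤ (n - 0) + 1 ∧ (n - 0) + 1 ≤ n))]
    rw [hq]
    push_cast
    field_simp
    ring
  · rcases eq_or_lt_of_le hm with hmn | hmn
    · subst hmn
      rw [if_neg (by omega : ¬(1 ≤ m + 1 ∧ m + 1 ≤ m)), if_pos (by omega : 1 ≤ (m - m) + 1 ∧ (m - m) + 1 ≤ m)]
      rw [hq]
      push_cast [Nat.sub_self]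
      field_simp
      ring
    · rw [if_pos (by omega : 1 ≤ m + 1 ∧ m + 1 ≤ n), if_pos (by omega : 1 ≤ (n - m) + 1 ∧ (n - m) + 1 ≤ n)]
      rw [hq, hq]
      push_cast [hNc]
      rw [← add_div, div_eq_div_iff (by positivity) (by positivity)]
      ring

lemma keyB (c : ℝ) (hc0 : 0 < c) (n : ℕ) (hn : 1 ≤ n)
    (hlow : 1 / ((n : ℝ) + 1) < c) (hhigh : c ≤ 1 / (n : ℝ))
    (r : ℝ) (hr : r = 1 - n * c)
    (q : ℕ → ℝ) (hq : ∀ k, q k = ((n : ℝ) - k + 1) / ((n : ℝ) * (n + 1)))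
    (a : ℝ → ℝ)
    (ha : ∀ x, a x = ∑ k ∈ Finset.Icc 1 n, q k *
      ((Set.Icc (((k : ℝ) - 1) * c) (k * c)).indicator 1 x +
       (Set.Icc (1 - (k : ℝ) * c) (1 - ((k : ℝ) - 1) * c)).indicator 1 x))
    (x : ℝ) (m : ℕ) (hm : m < n) (h1 : (m : ℝ) * c + r < x) (h2 : x < ((m : ℝ) + 1) * c) :
    a x = 1 / (n : ℝ) := by
  have hn0 : (0:ℝ) < n := by exact_mod_cast hn
  have hn1 : (0:ℝ) < (n:ℝ) + 1 := by linarith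
  have hr0 : 0 ≤ r := by
    rw [hr]
    have := (le_div_iff₀ hn0).mp hhigh
    nlinarith
  have hm' : m ≤ n := hm.le
  have hNc : ((n - m : ℕ) : ℝ) = (n : ℝ) - m := by rw [Nat.cast_sub hm']
  have hmr : (m : ℝ) + 1 ≤ n := by exact_mod_cast hm
  have mem1 : ∀ k : ℕ, x ∈ Set.Icc (((k : ℝ) - 1) * c) (k * c) ↔ k = m + 1 := by
    intro k
    simp only [Set.mem_Icc]
    have hx1 : (m : ℝ) * c < x := by nlinarith
    constructor
    · rintro ⟨hl, hu⟩
      have hk1 : (m : ℝ) < k := by nlinarith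
      have hk2 : (k : ℝ) < (m : ℝ) + 2 := by nlinarith
      have hk1' : m < k := by exact_mod_cast hk1
      have hk2' : (k : ℝ) < ((m + 2 : ℕ) : ℝ) := by push_cast; linarith
      have hk2'' : k < m + 2 := by exact_mod_cast hk2'
      omega
    · rintro rfl
      push_cast
      constructor <;> nlinarith
  have mem2 : ∀ k : ℕ, x ∈ Set.Icc (1 - (k : ℝ) * c) (1 - ((k : ℝ) - 1) * c)
      ↔ k = n - m := by
    intro k
    simp only [Set.mem_Icc]
    have hb1 : ((n : ℝ) - m - 1) * c < 1 - x := by nlinarith [hr]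
    have hb2 : 1 - x < ((n : ℝ) - m) * c := by nlinarith [hr]
    constructor
    · rintro ⟨hl, hu⟩
      have hk1 : (n : ℝ) - m - 1 < k := (mul_lt_mul_iff_left₀ hc0).mp (by linarith)
      have hk2 : (k : ℝ) - 1 < (n : ℝ) - m := (mul_lt_mul_iff_left₀ hc0).mp (by linarith)
      have hk1' : ((n - m : ℕ) : ℝ) - 1 < k := by rw [hNc]; linarith
      have hk1'' : n - m ≤ k := by
        by_contra hcon
        push_neg at hcon
        have : (k : ℝ) ≤ ((n - m : ℕ) : ℝ) - 1 := by
          have : (k : ℝ) + 1 ≤ ((n - m : ℕ) : ℝ) := by exact_mod_cast hcon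
          linarith
        linarith
      have hk2' : (k : ℝ) < (((n - m) + 1 : ℕ) : ℝ) := by push_cast [hNc]; linarith
      have hk2'' : k < (n - m) + 1 := by exact_mod_cast hk2'
      omega
    · rintro rfl
      push_cast [hNc]
      constructor <;> linarith
  rw [ha x]
  simp only [mul_add, Finset.sum_add_distrib]
  rw [sum_ind_eq q _ x (m + 1) mem1, sum_ind_eq q _ x (n - m) mem2]
  rw [if_pos (by omega : 1 ≤ m + 1 ∧ m + 1 ≤ n), if_pos (by omega : 1 ≤ n - m ∧ n - m ≤ n)]
  rw [hq, hq]
  push_cast [hNc]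
  rw [← add_div, div_eq_div_iff (by positivity) (by positivity)]
  ring

lemma keyMain (c : ℝ) (hc0 : 0 < c) (n : ℕ) (hn : 1 ≤ n)
    (hlow : 1 / ((n : ℝ) + 1) < c) (hhigh : c ≤ 1 / (n : ℝ))
    (r : ℝ) (hr : r = 1 - n * c)
    (q : ℕ → ℝ) (hq : ∀ k, q k = ((n : ℝ) - k + 1) / ((n : ℝ) * (n + 1)))
    (a : ℝ → ℝ)
    (ha : ∀ x, a x = ∑ k ∈ Finset.Icc 1 n, q k *
      ((Set.Icc (((k : ℝ) - 1) * c) (k * c)).indicator 1 x +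
       (Set.Icc (1 - (k : ℝ) * c) (1 - ((k : ℝ) - 1) * c)).indicator 1 x))
    (B : Set ℝ)
    (hB : B = Set.Ico 0 r ∪ (⋃ k ∈ Finset.Ico 1 n, Set.Ioo ((k : ℝ) * c) ((k : ℝ) * c + r))
        ∪ Set.Ioc ((n : ℝ) * c) 1)
    (x : ℝ) (hx0 : 0 ≤ x) (hx1 : x ≤ 1)
    (hE : ∀ m : ℕ, x ≠ m * c ∧ x ≠ m * c + r) :
    (x ∈ B ∧ a x = 1 / ((n : ℝ) + 1) ∧ Int.fract (x / c) * c < r) ∨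
    (x ∉ B ∧ a x = 1 / (n : ℝ) ∧ r ≤ Int.fract (x / c) * c) := by
  have hn0 : (0:ℝ) < n := by exact_mod_cast hn
  have hn1 : (0:ℝ) < (n:ℝ) + 1 := by linarith
  have h1c : 1 < ((n:ℝ) + 1) * c := by
    have := (div_lt_iff₀ hn1).mp hlow
    nlinarith
  have hrc : r < c := by rw [hr]; nlinarith
  have hr0 : 0 ≤ r := by
    rw [hr]
    have := (le_div_iff₀ hn0).mp hhigh
    nlinarith
  have hxpos : 0 < x := by
    rcases eq_or_lt_of_le hx0 with h | h
    · exact absurd h.symm (by simpa using (hE 0).1)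
    · exact h
  set m : ℕ := ⌊x / c⌋.toNat with hmdef
  have hflnn : (0:ℤ) ≤ ⌊x / c⌋ := Int.floor_nonneg.mpr (div_nonneg hx0 hc0.le)
  have hfl : ((m : ℤ) : ℝ) = ((⌊x / c⌋ : ℤ) : ℝ) := by
    rw [hmdef, Int.toNat_of_nonneg hflnn]
  have hmc : (m : ℝ) = ((⌊x / c⌋ : ℤ) : ℝ) := by exact_mod_cast hfl
  have hmx : (m : ℝ) * c ≤ x := by
    have := Int.floor_le (x / c)
    rw [← hmc] at this
    calc (m : ℝ) * c ≤ (x / c) * c := by nlinarith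
    _ = x := by field_simp
  have hxm : x < ((m : ℝ) + 1) * c := by
    have := Int.lt_floor_add_one (x / c)
    rw [← hmc] at this
    calc x = (x / c) * c := by field_simp
    _ < ((m : ℝ) + 1) * c := by nlinarith
  have hmx' : (m : ℝ) * c < x := lt_of_le_of_ne hmx (Ne.symm (hE m).1)
  have hfr : Int.fract (x / c) * c = x - m * c := by
    rw [Int.fract, ← hmc]
    field_simp
  have hm_le : m ≤ n := by
    have h1 : (m : ℝ) * c < ((n : ℝ) + 1) * c := by linarith
    have h2 : (m : ℝ) < (n : ℝ) + 1 := (mul_lt_mul_iff_left₀ hc0).mp h1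
    have h3 : (m : ℝ) < ((n + 1 : ℕ) : ℝ) := by push_cast; linarith
    have : m < n + 1 := by exact_mod_cast h3
    omega
  rcases lt_trichotomy x ((m : ℝ) * c + r) with hA | hEq | hC
  · left
    refine ⟨?_, keyA c hc0 n hn hlow r hr q hq a ha x m hm_le hmx' hA, by rw [hfr]; linarith⟩
    rw [hB]
    rcases Nat.eq_zero_or_pos m with hm0 | hm1
    · left; left
      rw [hm0] at hA
      simp only [Nat.cast_zero, zero_mul, zero_add] at hA
      exact ⟨hx0, hA⟩
    · rcases eq_or_lt_of_le hm_le with hmn | hmn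
      · right
        rw [← hmn]
        exact ⟨hmx', hx1⟩
      · left; right
        simp only [Set.mem_iUnion]
        exact ⟨m, Finset.mem_Ico.mpr ⟨hm1, hmn⟩, hmx', hA⟩
  · exact absurd hEq (hE m).2
  · right
    have hmn : m < n := by
      rcases eq_or_lt_of_le hm_le with h | h
      · exfalso
        rw [h, hr] at hC
        linarith
      · exact h
    refine ⟨?_, keyB c hc0 n hn hlow hhigh r hr q hq a ha x m hmn hC hxm, by rw [hfr]; linarith⟩
    rw [hB]
    intro hxB
    have hmc0 : (0:ℝ) ≤ (m : ℝ) * c := by positivity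
    rcases hxB with (h | h) | h
    · rcases h with ⟨_, h2⟩
      linarith
    · simp only [Set.mem_iUnion] at h
      obtain ⟨k, hk, hk1, hk2⟩ := h
      rcases le_or_gt k m with hkm | hkm
      · have : (k : ℝ) ≤ m := by exact_mod_cast hkm
        nlinarith
      · have : (m : ℝ) + 1 ≤ k := by exact_mod_cast hkm
        nlinarith
    · rcases h with ⟨h1, _⟩
      have : (m : ℝ) + 1 ≤ n := by exact_mod_cast hmn
      nlinarith

theorem stmt11 (c : ℝ) (hc0 : 0 < c) (hc1 : c ≤ 1) (n : ℕ) (hn : 1 ≤ n)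
    (hlow : 1 / ((n : ℝ) + 1) < c) (hhigh : c ≤ 1 / (n : ℝ))
    (r : ℝ) (hr : r = 1 - n * c)
    (q : ℕ → ℝ) (hq : ∀ k, q k = ((n : ℝ) - k + 1) / ((n : ℝ) * (n + 1)))
    (a : ℝ → ℝ)
    (ha : ∀ x, a x = ∑ k ∈ Finset.Icc 1 n, q k *
      ((Set.Icc (((k : ℝ) - 1) * c) (k * c)).indicator 1 x +
       (Set.Icc (1 - (k : ℝ) * c) (1 - ((k : ℝ) - 1) * c)).indicator 1 x))
    (B : Set ℝ)
    (hB : B = Set.Ico 0 r ∪ (⋃ k ∈ Finset.Ico 1 n, Set.Ioo ((k : ℝ) * c) ((k : ℝ) * c + r))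
        ∪ Set.Ioc ((n : ℝ) * c) 1) :
    (∀ᵐ x ∂(volume.restrict (Set.Icc (0:ℝ) 1)),
      (x ∈ B → a x = 1 / ((n : ℝ) + 1)) ∧ (x ∉ B → a x = 1 / (n : ℝ))) ∧
    ∀ t ∈ Set.Icc (0:ℝ) (1 - c), ∫ x in t..(t + c), (a x)⁻¹ = 1 := by
  have hn0 : (0:ℝ) < n := by exact_mod_cast hn
  have hn1 : (0:ℝ) < (n:ℝ) + 1 := by linarith
  have h1c : 1 < ((n:ℝ) + 1) * c := by
    have := (div_lt_iff₀ hn1).mp hlow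
    nlinarith
  have hrc : r < c := by rw [hr]; nlinarith
  have hr0 : 0 ≤ r := by
    rw [hr]
    have := (le_div_iff₀ hn0).mp hhigh
    nlinarith
  -- exceptional null set
  set E : Set ℝ := {y : ℝ | ∃ m : ℕ, y = m * c ∨ y = m * c + r} with hEdef
  have hEc : E.Countable := by
    have : E = ⋃ m : ℕ, ({(m : ℝ) * c, (m : ℝ) * c + r} : Set ℝ) := by
      ext y
      simp [hEdef, Set.mem_iUnion]
    rw [this]
    exact Set.countable_iUnion fun m => (Set.countable_singleton _).insert _
  have hE0 : volume E = 0 := hEc.measure_zero _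
  have haeE : ∀ᵐ x ∂(volume : Measure ℝ), x ∉ E := measure_eq_zero_iff_ae_notMem.mp hE0
  have keypt : ∀ x : ℝ, 0 ≤ x → x ≤ 1 → x ∉ E →
      (x ∈ B ∧ a x = 1 / ((n : ℝ) + 1) ∧ Int.fract (x / c) * c < r) ∨
      (x ∉ B ∧ a x = 1 / (n : ℝ) ∧ r ≤ Int.fract (x / c) * c) := by
    intro x hx0 hx1 hxE
    exact keyMain c hc0 n hn hlow hhigh r hr q hq a ha B hB x hx0 hx1
      (fun m => ⟨fun h => hxE ⟨m, Or.inl h⟩, fun h => hxE ⟨m, Or.inr h⟩⟩)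
  constructor
  · have h1 : ∀ᵐ x ∂(volume.restrict (Set.Icc (0:ℝ) 1)), x ∉ E :=
      Filter.Eventually.filter_mono (ae_mono Measure.restrict_le_self) haeE
    filter_upwards [h1, ae_restrict_mem measurableSet_Icc] with x hxE hxI
    rcases keypt x hxI.1 hxI.2 hxE with ⟨hxB, hax, _⟩ | ⟨hxB, hax, _⟩
    · exact ⟨fun _ => hax, fun hnot => absurd hxB hnot⟩
    · exact ⟨fun hmem => absurd hmem hxB, fun _ => hax⟩
  · intro t ht
    obtain ⟨ht0, ht1⟩ := ht
    set S : Set ℝ := {y : ℝ | Int.fract (y / c) * c < r} with hSdef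
    have hSm : MeasurableSet S := by
      have : Measurable fun y : ℝ => Int.fract (y / c) * c :=
        (measurable_fract.comp (measurable_id.div_const c)).mul_const c
      exact measurableSet_lt this measurable_const
    set g : ℝ → ℝ := fun y => (n : ℝ) + S.indicator 1 y with hgdef
    have hind_int : ∀ u v : ℝ, IntervalIntegrable (S.indicator (1 : ℝ → ℝ)) volume u v := by
      intro u v
      rw [intervalIntegrable_iff]
      exact (integrableOn_const measure_Ioc_lt_top.ne).indicator hSm
    have hgint : ∀ u v : ℝ, IntervalIntegrable g volume u v := by
      intro u v
      exact intervalIntegrable_const.add (hind_int u v)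
    have hper : Function.Periodic g c := by
      intro y
      have hdiv : (y + c) / c = y / c + 1 := by field_simp
      have hmem : (y + c) ∈ S ↔ y ∈ S := by
        simp only [hSdef, Set.mem_setOf_eq, hdiv, Int.fract_add_one]
      simp only [hgdef, Set.indicator_apply, hmem, Pi.one_apply]
    have hsub : Set.Ioc t (t + c) ⊆ Set.Icc (0:ℝ) 1 := fun y hy =>
      ⟨by linarith [hy.1], by linarith [hy.2]⟩
    have hcongr : ∫ x in t..(t + c), (a x)⁻¹ = ∫ x in t..(t + c), g x := by
      apply intervalIntegral.integral_congr_ae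
      filter_upwards [haeE] with x hxE hxI
      rw [Set.uIoc_of_le (by linarith : t ≤ t + c)] at hxI
      obtain ⟨hx0, hx1⟩ := hsub hxI
      rcases keypt x hx0 hx1 hxE with ⟨_, hax, hfr⟩ | ⟨_, hax, hfr⟩
      · rw [hax, hgdef]
        simp only [Set.indicator_of_mem (show x ∈ S from hfr), Pi.one_apply]
        rw [one_div, inv_inv]
      · rw [hax, hgdef]
        simp only [Set.indicator_of_notMem (show x ∉ S from not_lt.mpr hfr)]
        rw [one_div, inv_inv, add_zero]
    have hshift : ∫ x in t..(t + c), g x = ∫ x in (0:ℝ)..(0 + c), g x :=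
      hper.intervalIntegral_add_eq t 0
    -- compute ∫ 0..c g
    have hInd : ∀ u v : ℝ, IntervalIntegrable ((Set.Iio r).indicator (1 : ℝ → ℝ)) volume u v := by
      intro u v
      rw [intervalIntegrable_iff]
      exact (integrableOn_const measure_Ioc_lt_top.ne).indicator measurableSet_Iio
    set h : ℝ → ℝ := fun y => (n : ℝ) + (Set.Iio r).indicator 1 y with hhdef
    have hhint : ∀ u v : ℝ, IntervalIntegrable h volume u v := fun u v =>
      intervalIntegrable_const.add (hInd u v)
    have hgh : ∫ x in (0:ℝ)..c, g x = ∫ x in (0:ℝ)..c, h x := by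
      apply intervalIntegral.integral_congr_ae
      have hnec : ∀ᵐ x : ℝ ∂volume, x ≠ c := by
        have : volume ({c} : Set ℝ) = 0 := measure_singleton c
        exact measure_eq_zero_iff_ae_notMem.mp this
      filter_upwards [hnec] with x hxc hxI
      rw [Set.uIoc_of_le hc0.le] at hxI
      obtain ⟨hx0, hx1⟩ := hxI
      have hxlt : x < c := lt_of_le_of_ne hx1 hxc
      have hfr : Int.fract (x / c) = x / c :=
        Int.fract_eq_self.mpr ⟨div_nonneg hx0.le hc0.le, (div_lt_one hc0).mpr hxlt⟩
      have hfrc : Int.fract (x / c) * c = x := by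
        rw [hfr]; field_simp
      have hmem : x ∈ S ↔ x ∈ Set.Iio r := by
        simp only [hSdef, Set.mem_setOf_eq, hfrc, Set.mem_Iio]
      simp only [hgdef, hhdef, Set.indicator_apply, hmem, Pi.one_apply]
    have hsplit : ∫ x in (0:ℝ)..c, h x = (∫ x in (0:ℝ)..r, h x) + ∫ x in r..c, h x :=
      (intervalIntegral.integral_add_adjacent_intervals (hhint 0 r) (hhint r c)).symm
    have hpart1 : ∫ x in (0:ℝ)..r, h x = r * ((n : ℝ) + 1) := by
      have : ∫ x in (0:ℝ)..r, h x = ∫ x in (0:ℝ)..r, ((n : ℝ) + 1) := by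
        apply intervalIntegral.integral_congr_ae
        have hner : ∀ᵐ x : ℝ ∂volume, x ≠ r :=
          measure_eq_zero_iff_ae_notMem.mp (measure_singleton r)
        filter_upwards [hner] with x hxr hxI
        rw [Set.uIoc_of_le hr0] at hxI
        have hxlt : x < r := lt_of_le_of_ne hxI.2 hxr
        simp only [hhdef, Set.indicator_of_mem (Set.mem_Iio.mpr hxlt), Pi.one_apply]
      rw [this, intervalIntegral.integral_const, smul_eq_mul, sub_zero]
    have hpart2 : ∫ x in r..c, h x = (c - r) * (n : ℝ) := by
      have : ∫ x in r..c, h x = ∫ x in r..c, (n : ℝ) := by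
        apply intervalIntegral.integral_congr_ae
        apply Filter.Eventually.of_forall
        intro x hxI
        rw [Set.uIoc_of_le hrc.le] at hxI
        have : ¬ x < r := not_lt.mpr hxI.1.le
        simp only [hhdef, Set.indicator_of_notMem (fun hm => this (Set.mem_Iio.mp hm)), add_zero]
      rw [this, intervalIntegral.integral_const, smul_eq_mul]
    rw [hcongr, hshift, zero_add, hgh, hsplit, hpart1, hpart2]
    linear_combination hr
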